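/- Let k be a positive integer, let (μ_N)_{N=1}^∞ be distributions in D_alg(k), and let p₁ < p₂ < ⋯ < p_N < ⋯ be positive integers. (1) If there exists μ ∈ D_alg(k) such that the p_N-fold Boolean convolutions μ_N ⊎ ⋯ ⊎ μ_N converge in moments to μ, then the p_N-fold free additive convolutions μ_N ⊞ ⋯ ⊞ μ_N converge in moments to B(μ). (2) If there exists ν ∈ D_alg(k) such that the p_N-fold free additive convolutions μ_N ⊞ ⋯ ⊞ μ_N converge in moments to ν, then the p_N-fold Boolean convolutions μ_N ⊎ ⋯ ⊎ μ_N converge in moments to B⁻¹(ν). -/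

import Mathlib

open Finset

attribute [local instance] Classical.propDecidable

open scoped ComplexOrder

namespace BBP

/-- Partitions of `{1,…,m}` modeled as `Finpartition`s of `univ : Finset (Fin m)`. -/
abbrev FP (m : ℕ) := Finpartition (Finset.univ : Finset (Fin m))

noncomputable instance (m : ℕ) : Fintype (FP m) :=
  Fintype.ofInjective (fun π : FP m => π.parts) fun a b h => by
    cases a; cases b; simpa using h

/-- `x` is the minimum of the set `C`. -/
def IsMinOf {m : ℕ} (x : Fin m) (C : Finset (Fin m)) : Prop :=
  x ∈ C ∧ ∀ y ∈ C, x ≤ y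

/-- `x` is the maximum of the set `C`. -/
def IsMaxOf {m : ℕ} (x : Fin m) (C : Finset (Fin m)) : Prop :=
  x ∈ C ∧ ∀ y ∈ C, y ≤ x

/-- `a` and `b` lie in one block of `π`. -/
def SameBlock {m : ℕ} (π : FP m) (a b : Fin m) : Prop :=
  ∃ B ∈ π.parts, a ∈ B ∧ b ∈ B

/-- `π` is non-crossing: if `i<j<k<l`, `i,k` in one block and `j,l` in one block,
then all of them are in one block. -/
def IsNC {m : ℕ} (π : FP m) : Prop :=
  ∀ i j k l : Fin m, i < j → j < k → k < l →
    SameBlock π i k → SameBlock π j l → SameBlock π i j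

/-- `A` embraces `B` : `min A ≤ min B` and `max B ≤ max A`. -/
def Embraces {m : ℕ} (A B : Finset (Fin m)) : Prop :=
  ∃ a₁ a₂ b₁ b₂ : Fin m, IsMinOf a₁ A ∧ IsMaxOf a₂ A ∧ IsMinOf b₁ B ∧ IsMaxOf b₂ B ∧
    a₁ ≤ b₁ ∧ b₂ ≤ a₂

/-- `B` strictly embraces `A` : `min B < min A` and `max A < max B`. -/
def StrictlyEmbraces {m : ℕ} (B A : Finset (Fin m)) : Prop :=
  ∃ b₁ b₂ a₁ a₂ : Fin m, IsMinOf b₁ B ∧ IsMaxOf b₂ B ∧ IsMinOf a₁ A ∧ IsMaxOf a₂ A ∧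
    b₁ < a₁ ∧ a₂ < b₂

/-- `A` is an outer block of `π`. -/
def IsOuter {m : ℕ} (π : FP m) (A : Finset (Fin m)) : Prop :=
  A ∈ π.parts ∧ ¬ ∃ B ∈ π.parts, StrictlyEmbraces B A

/-- The number `|π|_out` of outer blocks of `π`. -/
noncomputable def numOuter {m : ℕ} (π : FP m) : ℕ :=
  (π.parts.filter fun A => IsOuter π A).card

/-- Reversed refinement order: every block of `ρ` is a union of blocks of `π`. -/
def Refines {m : ℕ} (π ρ : FP m) : Prop :=
  ∀ B ∈ π.parts, ∃ C ∈ ρ.parts, B ⊆ C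

/-- The partial order `π ≪ ρ`. -/
def Ll {m : ℕ} (π ρ : FP m) : Prop :=
  Refines π ρ ∧
    ∀ C ∈ ρ.parts, ∃ B ∈ π.parts, ∃ x y : Fin m,
      IsMinOf x C ∧ IsMaxOf y C ∧ x ∈ B ∧ y ∈ B

/-- The partition `1ₙ` of `{1,…,n+1}` with a single block. -/
noncomputable def fullPart (n : ℕ) : FP (n+1) :=
  Finpartition.indiscrete (by simpa using (Finset.univ_nonempty (α := Fin (n+1))).ne_empty)

/-- `π` is an interval partition. -/
def IsIntervalPartition {m : ℕ} (π : FP m) : Prop :=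
  ∀ B ∈ π.parts, ∀ x ∈ B, ∀ z ∈ B, ∀ y : Fin m, x ≤ y → y ≤ z → y ∈ B

/-- `σ` is the permutation associated to `π` : on each block `{b₁ < ⋯ < b_q}` it is the
cycle `b₁ ↦ b₂ ↦ ⋯ ↦ b_q ↦ b₁`. -/
def IsAssocPerm {m : ℕ} (π : FP m) (σ : Equiv.Perm (Fin m)) : Prop :=
  ∀ B ∈ π.parts, ∀ b ∈ B, σ b ∈ B ∧
    ((b < σ b ∧ ∀ x ∈ B, b < x → σ b ≤ x) ∨ (IsMaxOf b B ∧ IsMinOf (σ b) B))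

/-- `κ` is the Kreweras complement of `π`, characterized by `P_κ = P_π⁻¹ ∘ P_{1ₙ}`,
where `P_{1ₙ}` is the cycle `1 ↦ 2 ↦ ⋯ ↦ n ↦ 1` (i.e. `finRotate`). -/
def IsKrewerasPair {m : ℕ} (π κ : FP m) : Prop :=
  ∃ σπ σκ : Equiv.Perm (Fin m), IsAssocPerm π σπ ∧ IsAssocPerm κ σκ ∧
    σκ = σπ⁻¹ * finRotate m

/-- the element `2a-1` of `{1,…,2n}`, in `Fin (2n)` (0-indexed). -/
def oddEmb {n : ℕ} (a : Fin n) : Fin (2*n) := ⟨2*a.val, by have := a.isLt; omega⟩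

/-- the element `2a` of `{1,…,2n}`, in `Fin (2n)` (0-indexed). -/
def evenEmb {n : ℕ} (a : Fin n) : Fin (2*n) := ⟨2*a.val + 1, by have := a.isLt; omega⟩

/-- `θ = π^(odd) ∪ ρ^(even)` : the blocks of `θ` are the sets `{2a-1 : a ∈ A}` for `A`
a block of `π` and the sets `{2b : b ∈ B}` for `B` a block of `ρ`. -/
def IsOddEvenJoin {n : ℕ} (π ρ : FP n) (θ : FP (2*n)) : Prop :=
  θ.parts = π.parts.image (fun B => B.image oddEmb) ∪
    ρ.parts.image (fun B => B.image evenEmb)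

/-- a block consisting of odd elements of `{1,…,2n}` (even 0-indexed values). -/
def OddBlock {m : ℕ} (B : Finset (Fin m)) : Prop := ∀ x ∈ B, x.val % 2 = 0

/-- a block consisting of even elements of `{1,…,2n}` (odd 0-indexed values). -/
def EvenBlock {m : ℕ} (B : Finset (Fin m)) : Prop := ∀ x ∈ B, x.val % 2 = 1

/-- every block of `θ` is contained in the odds or in the evens. -/
def ParityPreserving {m : ℕ} (θ : FP m) : Prop :=
  ∀ B ∈ θ.parts, OddBlock B ∨ EvenBlock B

def OppositeParity {m : ℕ} (A B : Finset (Fin m)) : Prop :=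
  (OddBlock A ∧ EvenBlock B) ∨ (EvenBlock A ∧ OddBlock B)

def SameParity {m : ℕ} (A B : Finset (Fin m)) : Prop :=
  (OddBlock A ∧ OddBlock B) ∨ (EvenBlock A ∧ EvenBlock B)

/-- `P = Parent_θ(A)` : the unique block `P ≠ A` of `θ` embracing `A` such that every
block `A' ≠ A` of `θ` embracing `A` also embraces `P`. -/
def IsParent {m : ℕ} (θ : FP m) (A P : Finset (Fin m)) : Prop :=
  P ∈ θ.parts ∧ P ≠ A ∧ Embraces P A ∧
    ∀ A' ∈ θ.parts, A' ≠ A → Embraces A' A → Embraces A' P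

/-- `θ` has exactly two outer blocks. -/
def ExactlyTwoOuterBlocks {m : ℕ} (θ : FP m) : Prop :=
  ∃ M ∈ θ.parts, ∃ N ∈ θ.parts, M ≠ N ∧ IsOuter θ M ∧ IsOuter θ N ∧
    ∀ A ∈ θ.parts, IsOuter θ A → A = M ∨ A = N

/-- A series in `ℂ₀⟨⟨z₁,…,z_k⟩⟩`, given by its family of coefficients: `f n w` is the
coefficient of `z_{w 0} z_{w 1} ⋯ z_{w n}` (a word of length `n+1 ≥ 1`). -/
abbrev NCSeries (k : ℕ) := (n : ℕ) → (Fin (n+1) → Fin k) → ℂ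

/-- The coefficient `Cf_{w|B}(f)` of the restriction of the word `w` to the set `B`,
listing the elements of `B` in increasing order.  (Equals `1` for `B = ∅`.) -/
noncomputable def partCoeff {k m : ℕ} (f : NCSeries k) (w : Fin (m+1) → Fin k)
    (B : Finset (Fin (m+1))) : ℂ :=
  if h : B.Nonempty then
    f (B.card - 1) (fun j =>
      w ((B.orderIsoOfFin (Nat.succ_pred_eq_of_pos (Finset.card_pos.mpr h)).symm j).1))
  else 1

/-- The generalized coefficient `Cf_{w;π}(f) = ∏_{B block of π} Cf_{w|B}(f)`. -/
noncomputable def genCoeff {k m : ℕ} (f : NCSeries k) (w : Fin (m+1) → Fin k)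
    (π : FP (m+1)) : ℂ :=
  ∏ B ∈ π.parts, partCoeff f w B

/-- Linear functionals on `ℂ⟨X₁,…,X_k⟩`. -/
abbrev Dist (k : ℕ) := FreeAlgebra ℂ (Fin k) →ₗ[ℂ] ℂ

/-- `μ ∈ D_alg(k)` : `μ` is normalized by `μ(1) = 1`. -/
def IsDalg {k : ℕ} (μ : Dist k) : Prop := μ 1 = 1

/-- The moment series `M_μ`, with `(momentSeries μ) n w = μ (X_{w 0} ⋯ X_{w n})`. -/
noncomputable def momentSeries {k : ℕ} (μ : Dist k) : NCSeries k :=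
  fun _ w => μ ((List.ofFn fun j => FreeAlgebra.ι ℂ (w j)).prod)

/-- `f = R_μ` : the moments of `μ` are obtained from `f` by summation over all
non-crossing partitions. -/
def IsRTransform {k : ℕ} (μ : Dist k) (f : NCSeries k) : Prop :=
  ∀ (n : ℕ) (w : Fin (n+1) → Fin k),
    momentSeries μ n w = ∑ π : FP (n+1), if IsNC π then genCoeff f w π else 0

/-- `g = η_μ` : the moments of `μ` are obtained from `g` by summation over all
interval partitions. -/
def IsEtaSeries {k : ℕ} (μ : Dist k) (g : NCSeries k) : Prop :=
  ∀ (n : ℕ) (w : Fin (n+1) → Fin k),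
    momentSeries μ n w = ∑ π : FP (n+1), if IsIntervalPartition π then genCoeff g w π else 0

/-- `μ ∈ D_c(k)` : `μ` is the joint distribution of a `k`-tuple of selfadjoint elements
with respect to a state on a unital C*-algebra. -/
def IsDc {k : ℕ} (μ : Dist k) : Prop :=
  IsDalg μ ∧
  ∃ (A : Type) (_ : NormedRing A) (_ : StarRing A) (_ : CStarRing A)
    (_ : NormedAlgebra ℂ A) (_ : StarModule ℂ A) (_ : CompleteSpace A)
    (φ : A →ₗ[ℂ] ℂ) (x : Fin k → A),
      φ 1 = 1 ∧ (∀ a : A, 0 ≤ φ (star a * a)) ∧ (∀ i, IsSelfAdjoint (x i)) ∧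
      ∀ (n : ℕ) (w : Fin (n+1) → Fin k),
        momentSeries μ n w = φ ((List.ofFn fun j => x (w j)).prod)

/-- convergence in moments. -/
def ConvInMoments {k : ℕ} (μseq : ℕ → Dist k) (μ : Dist k) : Prop :=
  ∀ P : FreeAlgebra ℂ (Fin k),
    Filter.Tendsto (fun N => μseq N P) Filter.atTop (nhds (μ P))

/-- coefficientwise convergence of series. -/
def ConvCoeffwise {k : ℕ} (fseq : ℕ → NCSeries k) (f : NCSeries k) : Prop :=
  ∀ (n : ℕ) (w : Fin (n+1) → Fin k),
    Filter.Tendsto (fun N => fseq N n w) Filter.atTop (nhds (f n w))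

/-- `ν` is the `p`-fold free additive convolution `μ ⊞ ⋯ ⊞ μ`, i.e. `R_ν = p · R_μ`. -/
def IsNFoldFree {k : ℕ} (p : ℕ) (μ ν : Dist k) : Prop :=
  ∃ f : NCSeries k, IsRTransform μ f ∧ IsRTransform ν (fun n w => (p : ℂ) * f n w)

/-- `ν` is the `p`-fold Boolean convolution `μ ⊎ ⋯ ⊎ μ`, i.e. `η_ν = p · η_μ`. -/
def IsNFoldBool {k : ℕ} (p : ℕ) (μ ν : Dist k) : Prop :=
  ∃ g : NCSeries k, IsEtaSeries μ g ∧ IsEtaSeries ν (fun n w => (p : ℂ) * g n w)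

/-- `ν = 𝔹(μ)` : the Boolean Bercovici–Pata bijection, `R_{𝔹(μ)} = η_μ`. -/
def IsBP {k : ℕ} (μ ν : Dist k) : Prop :=
  ∃ f : NCSeries k, IsEtaSeries μ f ∧ IsRTransform ν f

/-- `μ ∈ D_c(k)` is infinitely divisible with respect to `⊞`. -/
def IsInfDiv {k : ℕ} (μ : Dist k) : Prop :=
  IsDc μ ∧ ∀ N : ℕ, 0 < N → ∃ ν : Dist k, IsDc ν ∧ IsNFoldFree N ν μ

/-- `g = Reta(f)`, i.e. there is `μ ∈ D_alg(k)` with `f = R_μ` and `g = η_μ`. -/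
def RetaRel {k : ℕ} (f g : NCSeries k) : Prop :=
  ∃ μ : Dist k, IsDalg μ ∧ IsRTransform μ f ∧ IsEtaSeries μ g


section Aux

variable {k : ℕ}

open Filter Topology

/-- predicate family version of interval partitions -/
abbrev QInt : ∀ m, FP m → Prop := fun _ π => IsIntervalPartition π
abbrev QNC : ∀ m, FP m → Prop := fun _ π => IsNC π

lemma fullPart_parts (n : ℕ) : (fullPart n).parts = {(Finset.univ : Finset (Fin (n+1)))} := by
  simp [fullPart]

lemma eq_fullPart {n : ℕ} (π : FP (n+1)) (h : (Finset.univ : Finset (Fin (n+1))) ∈ π.parts) :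
    π = fullPart n := by
  ext B
  rw [fullPart_parts, Finset.mem_singleton]
  constructor
  · intro hB
    obtain ⟨b, hb⟩ := π.nonempty_of_mem_parts hB
    exact π.eq_of_mem_parts hB h hb (Finset.mem_univ b)
  · rintro rfl; exact h

lemma exists_part {n : ℕ} (π : FP (n+1)) (a : Fin (n+1)) : ∃ B ∈ π.parts, a ∈ B :=
  π.exists_mem (Finset.mem_univ a)

lemma card_le_of_not_univ {n : ℕ} (π : FP (n+1)) (h : (Finset.univ : Finset (Fin (n+1))) ∉ π.parts)
    {B : Finset (Fin (n+1))} (hB : B ∈ π.parts) : 1 ≤ B.card ∧ B.card ≤ n := by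
  have h1 : 1 ≤ B.card := Finset.card_pos.mpr (π.nonempty_of_mem_parts hB)
  have h2 : B.card ≤ n + 1 := by
    simpa using Finset.card_le_card (B.subset_univ)
  refine ⟨h1, ?_⟩
  rcases Nat.lt_or_ge B.card (n+1) with h3 | h3
  · omega
  · exfalso
    have : B = Finset.univ := Finset.eq_univ_of_card B (by simp [Fintype.card_fin]; omega)
    exact h (this ▸ hB)

lemma two_parts_of_not_univ {n : ℕ} (π : FP (n+1))
    (h : (Finset.univ : Finset (Fin (n+1))) ∉ π.parts) : 2 ≤ π.parts.card := by
  obtain ⟨B0, hB0, hmem0⟩ := exists_part π 0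
  have hne : B0 ≠ Finset.univ := fun he => h (he ▸ hB0)
  obtain ⟨x, hx⟩ : ∃ x, x ∉ B0 := by
    by_contra hc
    push_neg at hc
    exact hne (Finset.eq_univ_iff_forall.mpr hc)
  obtain ⟨B1, hB1, hmem1⟩ := exists_part π x
  have : B0 ≠ B1 := fun he => hx (he ▸ hmem1)
  calc 2 = ({B0, B1} : Finset (Finset (Fin (n+1)))).card := by
        rw [Finset.card_insert_of_notMem (by simpa using this), Finset.card_singleton]
    _ ≤ π.parts.card := Finset.card_le_card (by
        intro B hB
        rcases Finset.mem_insert.mp hB with rfl | hB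
        · exact hB0
        · exact (Finset.mem_singleton.mp hB) ▸ hB1)

lemma ncApply_congr (f : NCSeries k) {a b : ℕ} (h : a = b) {u : Fin (a+1) → Fin k}
    {v : Fin (b+1) → Fin k} (huv : ∀ j : Fin (a+1), u j = v ⟨j.1, by omega⟩) :
    f a u = f b v := by
  subst h
  exact congrArg _ (funext fun j => (huv j).trans (congrArg v (Fin.ext rfl)))

lemma partCoeff_univ {m : ℕ} (f : NCSeries k) (w : Fin (m+1) → Fin k) :
    partCoeff f w Finset.univ = f m w := by
  have hne : (Finset.univ : Finset (Fin (m+1))).Nonempty := Finset.univ_nonempty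
  rw [partCoeff, dif_pos hne]
  have hc : (Finset.univ : Finset (Fin (m+1))).card - 1 = m := by simp
  refine ncApply_congr f hc fun j => congrArg w ?_
  rw [Finset.coe_orderIsoOfFin_apply]
  exact (congrFun (Finset.orderEmbOfFin_unique
    (f := fun j : Fin ((Finset.univ : Finset (Fin (m+1))).card - 1 + 1) =>
      (⟨j.1, by omega⟩ : Fin (m+1))) _ (fun x => Finset.mem_univ _)
      (fun a b hab => by simp only [Fin.mk_lt_mk]; exact hab)) j).symm

lemma genCoeff_full (n : ℕ) (f : NCSeries k) (w : Fin (n+1) → Fin k) :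
    genCoeff f w (fullPart n) = f n w := by
  rw [genCoeff, fullPart_parts, Finset.prod_singleton, partCoeff_univ]

lemma partCoeff_congr {f f' : NCSeries k} {m : ℕ} {w : Fin (m+1) → Fin k}
    {B : Finset (Fin (m+1))} (h : ∀ v, f (B.card - 1) v = f' (B.card - 1) v) :
    partCoeff f w B = partCoeff f' w B := by
  rw [partCoeff, partCoeff]
  split
  · exact h _
  · rfl

lemma genCoeff_congr_below {f f' : NCSeries k} {n : ℕ} {w : Fin (n+1) → Fin k}
    {π : FP (n+1)} (hπ : (Finset.univ : Finset (Fin (n+1))) ∉ π.parts)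
    (hff' : ∀ m, m < n → ∀ v, f m v = f' m v) :
    genCoeff f w π = genCoeff f' w π := by
  refine Finset.prod_congr rfl fun B hB => partCoeff_congr fun v => ?_
  obtain ⟨h1, h2⟩ := card_le_of_not_univ π hπ hB
  exact hff' (B.card - 1) (by omega) v

lemma partCoeff_smul {m : ℕ} (c : ℂ) (f : NCSeries k) (w : Fin (m+1) → Fin k)
    {B : Finset (Fin (m+1))} (hB : B.Nonempty) :
    partCoeff (fun n v => c * f n v) w B = c * partCoeff f w B := by
  rw [partCoeff, partCoeff, dif_pos hB, dif_pos hB]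

lemma genCoeff_smul {n : ℕ} (c : ℂ) (f : NCSeries k) (w : Fin (n+1) → Fin k) (π : FP (n+1)) :
    genCoeff (fun n v => c * f n v) w π = c ^ π.parts.card * genCoeff f w π := by
  rw [genCoeff, genCoeff, ← Finset.prod_const, ← Finset.prod_mul_distrib]
  exact Finset.prod_congr rfl fun B hB => partCoeff_smul c f w (π.nonempty_of_mem_parts hB)

end Aux

section Aux2

variable {k : ℕ}

open Filter Topology

/-- `M = momentsOf Q f` : general "moments from series by summation over `Q`-partitions". -/
noncomputable def momentsOf (Q : ∀ m, FP m → Prop) (f : NCSeries k) : NCSeries k :=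
  fun n w => ∑ π : FP (n+1), if Q (n+1) π then genCoeff f w π else 0

/-- `f` is the `Q`-series of the moment family `M`. -/
def Spec (Q : ∀ m, FP m → Prop) (M f : NCSeries k) : Prop :=
  ∀ (n : ℕ) (w : Fin (n+1) → Fin k), M n w = momentsOf Q f n w

/-- the `Q`-series of a moment family, defined recursively. -/
noncomputable def seriesOf (Q : ∀ m, FP m → Prop) (M : NCSeries k) :
    (n : ℕ) → (Fin (n+1) → Fin k) → ℂ
  | n => fun w => M n w - ∑ π : FP (n+1),
      if Q (n+1) π ∧ (Finset.univ : Finset (Fin (n+1))) ∉ π.parts then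
        genCoeff (fun m v => if h : m < n then seriesOf Q M m v else 0) w π
      else 0
  termination_by n => n
  decreasing_by exact h

lemma seriesOf_eq (Q : ∀ m, FP m → Prop) (M : NCSeries k) (n : ℕ) (w : Fin (n+1) → Fin k) :
    seriesOf Q M n w = M n w - ∑ π : FP (n+1),
      if Q (n+1) π ∧ (Finset.univ : Finset (Fin (n+1))) ∉ π.parts then
        genCoeff (seriesOf Q M) w π
      else 0 := by
  rw [seriesOf]
  refine congrArg (fun t => M n w - t) ?_
  refine Finset.sum_congr rfl fun π _ => ?_
  by_cases hQ : Q (n+1) π ∧ (Finset.univ : Finset (Fin (n+1))) ∉ π.parts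
  · rw [if_pos hQ, if_pos hQ]
    exact genCoeff_congr_below hQ.2 fun m hm v => dif_pos hm
  · rw [if_neg hQ, if_neg hQ]

/-- splitting off the full partition from the `Q`-sum. -/
lemma momentsOf_split (Q : ∀ m, FP m → Prop) (f : NCSeries k) (n : ℕ)
    (w : Fin (n+1) → Fin k) (hQfull : Q (n+1) (fullPart n)) :
    momentsOf Q f n w = f n w + ∑ π : FP (n+1),
      if Q (n+1) π ∧ (Finset.univ : Finset (Fin (n+1))) ∉ π.parts then
        genCoeff f w π
      else 0 := by
  have hsplit : ∀ π : FP (n+1),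
      (if Q (n+1) π then genCoeff f w π else 0) =
      (if π = fullPart n then genCoeff f w π else 0) +
      (if Q (n+1) π ∧ (Finset.univ : Finset (Fin (n+1))) ∉ π.parts then genCoeff f w π
        else 0) := by
    intro π
    by_cases hfull : π = fullPart n
    · subst hfull
      have hmem : (Finset.univ : Finset (Fin (n+1))) ∈ (fullPart n).parts := by
        rw [fullPart_parts]; exact Finset.mem_singleton_self _
      rw [if_pos rfl, if_pos hQfull, if_neg (by tauto), add_zero]
    · have hnuniv : (Finset.univ : Finset (Fin (n+1))) ∉ π.parts :=
        fun h => hfull (eq_fullPart π h)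
      rw [if_neg hfull, zero_add]
      by_cases hQ : Q (n+1) π
      · rw [if_pos hQ, if_pos ⟨hQ, hnuniv⟩]
      · rw [if_neg hQ, if_neg (by tauto)]
  simp only [momentsOf]
  rw [Finset.sum_congr rfl fun π _ => hsplit π, Finset.sum_add_distrib]
  congr 1
  rw [Finset.sum_ite_eq' Finset.univ (fullPart n) (fun π => genCoeff f w π),
    if_pos (Finset.mem_univ _), genCoeff_full]

lemma spec_seriesOf (Q : ∀ m, FP m → Prop) (hQfull : ∀ n, Q (n+1) (fullPart n))
    (M : NCSeries k) : Spec Q M (seriesOf Q M) := by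
  intro n w
  rw [momentsOf_split Q _ n w (hQfull n), seriesOf_eq]
  ring

lemma spec_unique {Q : ∀ m, FP m → Prop} (hQfull : ∀ n, Q (n+1) (fullPart n))
    {M f : NCSeries k} (hf : Spec Q M f) : f = seriesOf Q M := by
  have key : ∀ n, ∀ v : Fin (n+1) → Fin k, f n v = seriesOf Q M n v := by
    intro n
    induction n using Nat.strong_induction_on with
    | _ n ih =>
      intro v
      have h1 := hf n v
      have h2 := spec_seriesOf Q hQfull M n v
      rw [momentsOf_split Q _ n v (hQfull n)] at h1 h2
      have heq : ∑ π : FP (n+1),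
          (if Q (n+1) π ∧ (Finset.univ : Finset (Fin (n+1))) ∉ π.parts then
            genCoeff f v π else 0)
          = ∑ π : FP (n+1),
          (if Q (n+1) π ∧ (Finset.univ : Finset (Fin (n+1))) ∉ π.parts then
            genCoeff (seriesOf Q M) v π else 0) := by
        refine Finset.sum_congr rfl fun π _ => ?_
        by_cases hQ : Q (n+1) π ∧ (Finset.univ : Finset (Fin (n+1))) ∉ π.parts
        · rw [if_pos hQ, if_pos hQ]
          exact genCoeff_congr_below hQ.2 fun m' hm' v' => ih m' hm' v'
        · rw [if_neg hQ, if_neg hQ]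
      rw [heq] at h1
      exact add_right_cancel (h1.symm.trans h2)
  funext n v
  exact key n v

end Aux2

section Aux3

variable {k : ℕ}

open Filter Topology

lemma tendsto_partCoeff {fseq : ℕ → NCSeries k} {f : NCSeries k} {n : ℕ}
    {w : Fin (n+1) → Fin k} {B : Finset (Fin (n+1))}
    (h : ∀ v, Filter.Tendsto (fun N => fseq N (B.card - 1) v) Filter.atTop
      (nhds (f (B.card - 1) v))) :
    Filter.Tendsto (fun N => partCoeff (fseq N) w B) Filter.atTop (nhds (partCoeff f w B)) := by
  by_cases hB : B.Nonempty
  · simp only [partCoeff, dif_pos hB]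
    exact h _
  · simp only [partCoeff, dif_neg hB]
    exact tendsto_const_nhds

lemma tendsto_genCoeff {fseq : ℕ → NCSeries k} {f : NCSeries k} {n : ℕ}
    {w : Fin (n+1) → Fin k} {π : FP (n+1)}
    (h : ∀ B ∈ π.parts, ∀ v, Filter.Tendsto (fun N => fseq N (B.card - 1) v) Filter.atTop
      (nhds (f (B.card - 1) v))) :
    Filter.Tendsto (fun N => genCoeff (fseq N) w π) Filter.atTop (nhds (genCoeff f w π)) := by
  simp only [genCoeff]
  exact tendsto_finset_prod _ fun B hB => tendsto_partCoeff (h B hB)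

/-- (A) : convergence of moments implies convergence of the associated series. -/
lemma tendsto_seriesOf {Q : ∀ m, FP m → Prop} {Mseq : ℕ → NCSeries k} {M : NCSeries k}
    (hconv : ∀ (n : ℕ) (w : Fin (n+1) → Fin k),
      Filter.Tendsto (fun N => Mseq N n w) Filter.atTop (nhds (M n w))) :
    ∀ (n : ℕ) (w : Fin (n+1) → Fin k),
      Filter.Tendsto (fun N => seriesOf Q (Mseq N) n w) Filter.atTop
        (nhds (seriesOf Q M n w)) := by
  intro n
  induction n using Nat.strong_induction_on with
  | _ n ih =>
    intro w
    have heq : ∀ N, seriesOf Q (Mseq N) n w = Mseq N n w - ∑ π : FP (n+1),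
        if Q (n+1) π ∧ (Finset.univ : Finset (Fin (n+1))) ∉ π.parts then
          genCoeff (seriesOf Q (Mseq N)) w π
        else 0 := fun N => seriesOf_eq Q (Mseq N) n w
    rw [seriesOf_eq Q M n w]
    simp only [heq]
    refine Filter.Tendsto.sub (hconv n w) (tendsto_finset_sum _ fun π _ => ?_)
    by_cases hQ : Q (n+1) π ∧ (Finset.univ : Finset (Fin (n+1))) ∉ π.parts
    · simp only [if_pos hQ]
      refine tendsto_genCoeff fun B hB v => ?_
      obtain ⟨hc1, hc2⟩ := card_le_of_not_univ π hQ.2 hB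
      exact ih (B.card - 1) (by omega) v
    · simp only [if_neg hQ]
      exact tendsto_const_nhds

/-- (B) : the key asymptotic transfer lemma. -/
lemma key_transfer {Q Q' : ∀ m, FP m → Prop}
    (hQfull : ∀ n, Q (n+1) (fullPart n)) (hQ'full : ∀ n, Q' (n+1) (fullPart n))
    {mom gseq fseq : ℕ → NCSeries k}
    (hg : ∀ N, Spec Q (mom N) (gseq N)) (hfR : ∀ N, Spec Q' (mom N) (fseq N))
    {c : ℕ → ℂ} (hc0 : ∀ N, c N ≠ 0)
    (hcinv : Filter.Tendsto (fun N => (c N)⁻¹) Filter.atTop (nhds 0))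
    {g : NCSeries k}
    (hcg : ∀ (n : ℕ) (w : Fin (n+1) → Fin k),
      Filter.Tendsto (fun N => c N * gseq N n w) Filter.atTop (nhds (g n w))) :
    ∀ (n : ℕ) (w : Fin (n+1) → Fin k),
      Filter.Tendsto (fun N => c N * fseq N n w) Filter.atTop (nhds (g n w)) := by
  intro n
  induction n using Nat.strong_induction_on with
  | _ n ih =>
    intro w
    -- the scaled generalized coefficient trick
    have hscal : ∀ (h : NCSeries k) (N : ℕ) (π : FP (n+1)),
        (Finset.univ : Finset (Fin (n+1))) ∉ π.parts →
        c N * genCoeff h w π =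
          ((c N)⁻¹) ^ (π.parts.card - 1) * genCoeff (fun m v => c N * h m v) w π := by
      intro h N π hπ
      have hm : 2 ≤ π.parts.card := two_parts_of_not_univ π hπ
      have hc := hc0 N
      have hpow : c N ^ π.parts.card = c N ^ (π.parts.card - 1) * c N := by
        rw [← pow_succ]
        congr 1
        omega
      have h1 : (c N)⁻¹ ^ (π.parts.card - 1) * c N ^ (π.parts.card - 1) = 1 := by
        rw [← mul_pow, inv_mul_cancel₀ hc, one_pow]
      rw [genCoeff_smul, hpow]
      calc c N * genCoeff h w π
          = ((c N)⁻¹ ^ (π.parts.card - 1) * c N ^ (π.parts.card - 1)) *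
              (c N * genCoeff h w π) := by rw [h1, one_mul]
        _ = (c N)⁻¹ ^ (π.parts.card - 1) * (c N ^ (π.parts.card - 1) * c N *
              genCoeff h w π) := by ring
    -- expression of c N * fseq N n w
    have hexpr : ∀ N, c N * fseq N n w =
        c N * gseq N n w +
        (∑ π : FP (n+1), if Q (n+1) π ∧ (Finset.univ : Finset (Fin (n+1))) ∉ π.parts then
          ((c N)⁻¹) ^ (π.parts.card - 1) * genCoeff (fun m v => c N * gseq N m v) w π else 0) -
        (∑ π : FP (n+1), if Q' (n+1) π ∧ (Finset.univ : Finset (Fin (n+1))) ∉ π.parts then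
          ((c N)⁻¹) ^ (π.parts.card - 1) * genCoeff (fun m v => c N * fseq N m v) w π else 0)
        := by
      intro N
      have h1 := (hg N n w).symm.trans (hfR N n w)
      rw [momentsOf_split Q _ n w (hQfull n), momentsOf_split Q' _ n w (hQ'full n)] at h1
      have h2 : c N * (gseq N n w + ∑ π : FP (n+1),
          (if Q (n+1) π ∧ (Finset.univ : Finset (Fin (n+1))) ∉ π.parts then
            genCoeff (gseq N) w π else 0)) =
          c N * (fseq N n w + ∑ π : FP (n+1),
          (if Q' (n+1) π ∧ (Finset.univ : Finset (Fin (n+1))) ∉ π.parts then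
            genCoeff (fseq N) w π else 0)) := by rw [h1]
      rw [mul_add, mul_add, Finset.mul_sum, Finset.mul_sum] at h2
      have h3 : ∀ (h : NCSeries k) (Qx : ∀ m, FP m → Prop), (∑ π : FP (n+1), c N *
          (if Qx (n+1) π ∧ (Finset.univ : Finset (Fin (n+1))) ∉ π.parts then
            genCoeff h w π else 0)) =
          ∑ π : FP (n+1),
          (if Qx (n+1) π ∧ (Finset.univ : Finset (Fin (n+1))) ∉ π.parts then
            ((c N)⁻¹) ^ (π.parts.card - 1) * genCoeff (fun m v => c N * h m v) w π else 0) := by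
        intro h Qx
        refine Finset.sum_congr rfl fun π _ => ?_
        by_cases hQ : Qx (n+1) π ∧ (Finset.univ : Finset (Fin (n+1))) ∉ π.parts
        · rw [if_pos hQ, if_pos hQ, hscal h N π hQ.2]
        · rw [if_neg hQ, if_neg hQ, mul_zero]
      rw [h3 (gseq N) Q, h3 (fseq N) Q'] at h2
      linear_combination -h2
    simp only [hexpr]
    have hzero : ∀ (Qx : ∀ m, FP m → Prop) (hseq : ℕ → NCSeries k),
        (∀ m, m < n → ∀ v, Filter.Tendsto (fun N => c N * hseq N m v) Filter.atTop
          (nhds (g m v))) →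
        Filter.Tendsto (fun N => ∑ π : FP (n+1),
          if Qx (n+1) π ∧ (Finset.univ : Finset (Fin (n+1))) ∉ π.parts then
            ((c N)⁻¹) ^ (π.parts.card - 1) * genCoeff (fun m v => c N * hseq N m v) w π else 0)
          Filter.atTop (nhds 0) := by
      intro Qx hseq hh
      have hsum : Filter.Tendsto (fun N => ∑ π : FP (n+1),
          if Qx (n+1) π ∧ (Finset.univ : Finset (Fin (n+1))) ∉ π.parts then
            ((c N)⁻¹) ^ (π.parts.card - 1) * genCoeff (fun m v => c N * hseq N m v) w π else 0)
          Filter.atTop (nhds (∑ _π : FP (n+1), (0:ℂ))) := by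
        refine tendsto_finset_sum _ fun π _ => ?_
        by_cases hQ : Qx (n+1) π ∧ (Finset.univ : Finset (Fin (n+1))) ∉ π.parts
        · simp only [if_pos hQ]
          have hm : 2 ≤ π.parts.card := two_parts_of_not_univ π hQ.2
          have t1 : Filter.Tendsto (fun N => ((c N)⁻¹) ^ (π.parts.card - 1)) Filter.atTop
              (nhds 0) := by
            have := hcinv.pow (π.parts.card - 1)
            rwa [zero_pow (by omega)] at this
          have t2 : Filter.Tendsto (fun N => genCoeff (fun m v => c N * hseq N m v) w π)
              Filter.atTop (nhds (genCoeff g w π)) := by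
            refine tendsto_genCoeff fun B hB v => ?_
            obtain ⟨hc1, hc2⟩ := card_le_of_not_univ π hQ.2 hB
            exact hh (B.card - 1) (by omega) v
          simpa using t1.mul t2
        · simp only [if_neg hQ]
          exact tendsto_const_nhds
      simpa using hsum
    have := ((hcg n w).add (hzero Q gseq (fun m hm v => hcg m v))).sub
      (hzero Q' fseq (fun m hm v => ih m hm v))
    simpa using this

end Aux3

section Aux4

variable {k : ℕ}

open Filter Topology

noncomputable abbrev wordBasis (k : ℕ) : Module.Basis (FreeMonoid (Fin k)) ℂ (FreeAlgebra ℂ (Fin k)) :=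
  FreeAlgebra.basisFreeMonoid ℂ (Fin k)

lemma wordBasis_apply (l : List (Fin k)) :
    wordBasis k (FreeMonoid.ofList l) = (l.map (FreeAlgebra.ι ℂ)).prod := by
  have key : ∀ l' : List (Fin k),
      (FreeAlgebra.equivMonoidAlgebraFreeMonoid (R := ℂ) (X := Fin k))
        ((l'.map (FreeAlgebra.ι ℂ)).prod)
        = MonoidAlgebra.single (FreeMonoid.ofList l') 1 := by
    intro l'
    induction l' with
    | nil =>
      simp [MonoidAlgebra.one_def]
    | cons x t iht =>
      rw [List.map_cons, List.prod_cons, map_mul, iht]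
      have hx : (FreeAlgebra.equivMonoidAlgebraFreeMonoid (R := ℂ) (X := Fin k))
          (FreeAlgebra.ι ℂ x) = MonoidAlgebra.single (FreeMonoid.of x) 1 := by
        simp [FreeAlgebra.equivMonoidAlgebraFreeMonoid, MonoidAlgebra.of_apply]
      rw [hx, MonoidAlgebra.single_mul_single, one_mul]
      rfl
  have : wordBasis k (FreeMonoid.ofList l) =
      (FreeAlgebra.equivMonoidAlgebraFreeMonoid (R := ℂ) (X := Fin k)).symm
        (MonoidAlgebra.single (FreeMonoid.ofList l) 1) := by
    simp [wordBasis, FreeAlgebra.basisFreeMonoid, Finsupp.basisSingleOne]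
  rw [this, ← key l]
  exact (FreeAlgebra.equivMonoidAlgebraFreeMonoid (R := ℂ) (X := Fin k)).symm_apply_apply _

lemma wordBasis_one : wordBasis k (FreeMonoid.ofList []) = 1 := by
  rw [wordBasis_apply]
  simp

lemma wordBasis_ofFn (n : ℕ) (w : Fin (n+1) → Fin k) :
    wordBasis k (FreeMonoid.ofList (List.ofFn w)) =
      (List.ofFn fun j => FreeAlgebra.ι ℂ (w j)).prod := by
  rw [wordBasis_apply, List.map_ofFn]
  rfl

/-- the distribution with prescribed moments `M`. -/
noncomputable def distOf (M : NCSeries k) : Dist k :=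
  Module.Basis.constr (wordBasis k) ℂ fun l : FreeMonoid (Fin k) =>
    if h : FreeMonoid.toList l = [] then 1
    else M ((FreeMonoid.toList l).length - 1) fun j =>
      (FreeMonoid.toList l).get (Fin.cast (by
        have : (FreeMonoid.toList l).length ≠ 0 := fun hc => h (List.eq_nil_of_length_eq_zero hc)
        omega) j)

lemma distOf_isDalg (M : NCSeries k) : IsDalg (distOf M) := by
  have h1 : (1 : FreeAlgebra ℂ (Fin k)) = wordBasis k (FreeMonoid.ofList []) :=
    wordBasis_one.symm
  rw [IsDalg, h1, distOf, Module.Basis.constr_basis]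
  rfl

lemma momentSeries_distOf (M : NCSeries k) (n : ℕ) (w : Fin (n+1) → Fin k) :
    momentSeries (distOf M) n w = M n w := by
  rw [momentSeries, ← wordBasis_ofFn, distOf, Module.Basis.constr_basis]
  have hne : FreeMonoid.toList (FreeMonoid.ofList (List.ofFn w)) ≠ [] := by
    simp [FreeMonoid.toList_ofList]
  rw [dif_neg hne]
  refine ncApply_congr M (by simp [FreeMonoid.toList_ofList]) fun j => ?_
  show (List.ofFn w).get _ = _
  refine (List.get_ofFn w _).trans ?_
  exact congrArg w (Fin.ext rfl)

/-- evaluating a linear functional via the word basis. -/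
lemma dist_apply_eq_sum (φ : Dist k) (P : FreeAlgebra ℂ (Fin k)) :
    φ P = ((wordBasis k).repr P).sum fun l c => c * φ (wordBasis k l) := by
  conv_lhs => rw [← (wordBasis k).linearCombination_repr P]
  rw [Finsupp.linearCombination_apply, Finsupp.sum, map_sum, Finsupp.sum]
  refine Finset.sum_congr rfl fun l _ => ?_
  rw [map_smul]
  rfl

/-- moment convergence on words implies convergence in moments. -/
lemma convInMoments_of_words {φseq : ℕ → Dist k} {φ : Dist k}
    (h1 : ∀ N, IsDalg (φseq N)) (h1' : IsDalg φ)
    (h : ∀ (n : ℕ) (w : Fin (n+1) → Fin k),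
      Filter.Tendsto (fun N => momentSeries (φseq N) n w) Filter.atTop
        (nhds (momentSeries φ n w))) :
    ConvInMoments φseq φ := by
  have hword : ∀ l : FreeMonoid (Fin k),
      Filter.Tendsto (fun N => φseq N (wordBasis k l)) Filter.atTop
        (nhds (φ (wordBasis k l))) := by
    intro l
    rcases List.eq_nil_or_concat (FreeMonoid.toList l) with hnil | hcons
    · have hl : l = FreeMonoid.ofList [] := hnil
      rw [hl, wordBasis_one]
      have hc : (fun N => φseq N 1) = fun _ => (1:ℂ) := funext fun N => h1 N
      rw [hc, show φ 1 = 1 from h1']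
      exact tendsto_const_nhds
    · have hlen : 0 < (FreeMonoid.toList l).length := by
        rcases hcons with ⟨t, x, hx⟩
        rw [hx]; simp
      set L := FreeMonoid.toList l with hL
      set n := L.length - 1 with hn
      have hlen' : L.length = n + 1 := by omega
      set w : Fin (n+1) → Fin k := fun j => L.get (Fin.cast hlen'.symm j) with hw
      have hLw : L = List.ofFn w := by
        refine List.ext_getElem (by simp [hlen']) fun i h1i h2i => ?_
        rw [List.getElem_ofFn]
        simp [hw, List.get_eq_getElem]
      have hlw : l = FreeMonoid.ofList (List.ofFn w) := by
        rw [← hLw]; rfl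
      rw [hlw, wordBasis_ofFn]
      exact h n w
  intro P
  have heval : ∀ ψ : Dist k, ψ P = ∑ l ∈ ((wordBasis k).repr P).support,
      ((wordBasis k).repr P) l * ψ (wordBasis k l) := fun ψ => dist_apply_eq_sum ψ P
  simp only [heval]
  exact tendsto_finset_sum _ fun l _ => (tendsto_const_nhds).mul (hword l)

end Aux4

section Aux5

variable {k : ℕ}

open Filter Topology

lemma tendsto_momentsOf {Q : ∀ m, FP m → Prop} {hseq : ℕ → NCSeries k} {h : NCSeries k}
    (hconv : ∀ (m : ℕ) (v : Fin (m+1) → Fin k),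
      Filter.Tendsto (fun N => hseq N m v) Filter.atTop (nhds (h m v)))
    (n : ℕ) (w : Fin (n+1) → Fin k) :
    Filter.Tendsto (fun N => momentsOf Q (hseq N) n w) Filter.atTop
      (nhds (momentsOf Q h n w)) := by
  simp only [momentsOf]
  refine tendsto_finset_sum _ fun π _ => ?_
  by_cases hQ : Q (n+1) π
  · simp only [if_pos hQ]
    exact tendsto_genCoeff fun B _ v => hconv _ v
  · simp only [if_neg hQ]
    exact tendsto_const_nhds

lemma tendsto_inv_cast {p : ℕ → ℕ} (hpmono : StrictMono p) :
    Filter.Tendsto (fun N => ((p N : ℂ))⁻¹) Filter.atTop (nhds 0) := by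
  have h1 : Filter.Tendsto (fun N => (p N : ℝ)) Filter.atTop Filter.atTop :=
    tendsto_natCast_atTop_atTop.comp hpmono.tendsto_atTop
  have h2 : Filter.Tendsto (fun N => ((p N : ℝ))⁻¹) Filter.atTop (nhds 0) :=
    h1.inv_tendsto_atTop
  have h3 := (Complex.continuous_ofReal.tendsto 0).comp h2
  rw [Complex.ofReal_zero] at h3
  refine h3.congr fun N => ?_
  simp [Function.comp]

end Aux5

/-- Lemma 5.5: let `(μ_N)` be in `D_alg(k)` and `p₁ < p₂ < ⋯` be
positive integers; let `b_N = μ_N ⊎ ⋯ ⊎ μ_N` (`p_N` times) and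
`f_N = μ_N ⊞ ⋯ ⊞ μ_N` (`p_N` times).
(1) If `b_N → μ ∈ D_alg(k)` in moments then `f_N → 𝔹(μ)` in moments.
(2) If `f_N → ν ∈ D_alg(k)` in moments then `b_N → 𝔹⁻¹(ν)` in moments. -/

theorem statement10 (k : ℕ) (hk : 0 < k) (μseq : ℕ → Dist k)
    (hμseq : ∀ N, IsDalg (μseq N))
    (p : ℕ → ℕ) (hp : ∀ N, 0 < p N) (hpmono : StrictMono p)
    (bseq fseq : ℕ → Dist k)
    (hbalg : ∀ N, IsDalg (bseq N)) (hfalg : ∀ N, IsDalg (fseq N))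
    (hb : ∀ N, IsNFoldBool (p N) (μseq N) (bseq N))
    (hf : ∀ N, IsNFoldFree (p N) (μseq N) (fseq N)) :
    (∀ μ : Dist k, IsDalg μ → ConvInMoments bseq μ →
      ∃ ν : Dist k, IsDalg ν ∧ IsBP μ ν ∧ ConvInMoments fseq ν) ∧
    (∀ ν : Dist k, IsDalg ν → ConvInMoments fseq ν →
      ∃ μ : Dist k, IsDalg μ ∧ IsBP μ ν ∧ ConvInMoments bseq μ) := by
  classical
  have hIfull : ∀ n, QInt (n+1) (fullPart n) := by
    intro n B hB x _ z _ y _ _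
    rw [fullPart_parts, Finset.mem_singleton] at hB
    rw [hB]
    exact Finset.mem_univ y
  have hNfull : ∀ n, QNC (n+1) (fullPart n) := by
    intro n i j kk l _ _ _ _ _
    exact ⟨Finset.univ, by rw [fullPart_parts]; exact Finset.mem_singleton_self _,
      Finset.mem_univ _, Finset.mem_univ _⟩
  have hc0 : ∀ N, ((p N : ℂ)) ≠ 0 := fun N => Nat.cast_ne_zero.mpr (hp N).ne'
  have hcinv := tendsto_inv_cast hpmono
  -- the η- and R-series of the μseq
  set gN : ℕ → NCSeries k := fun N => seriesOf QInt (momentSeries (μseq N)) with hgNdef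
  set fN : ℕ → NCSeries k := fun N => seriesOf QNC (momentSeries (μseq N)) with hfNdef
  have hgN : ∀ N, Spec QInt (momentSeries (μseq N)) (gN N) :=
    fun N => spec_seriesOf _ hIfull _
  have hfN : ∀ N, Spec QNC (momentSeries (μseq N)) (fN N) :=
    fun N => spec_seriesOf _ hNfull _
  -- identify the witnesses in the hypotheses
  have hbspec : ∀ N, Spec QInt (momentSeries (bseq N))
      (fun n w => ((p N : ℕ) : ℂ) * gN N n w) := by
    intro N
    obtain ⟨g, hg1, hg2⟩ := hb N
    have hEq : g = gN N := spec_unique hIfull hg1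
    rw [← hEq]
    exact hg2
  have hfspec : ∀ N, Spec QNC (momentSeries (fseq N))
      (fun n w => ((p N : ℕ) : ℂ) * fN N n w) := by
    intro N
    obtain ⟨f, hf1, hf2⟩ := hf N
    have hEq : f = fN N := spec_unique hNfull hf1
    rw [← hEq]
    exact hf2
  constructor
  · -- Boolean convergence implies free convergence to 𝔹(μ)
    intro μ hμalg hconv
    set g : NCSeries k := seriesOf QInt (momentSeries μ) with hgdef
    have hμg : Spec QInt (momentSeries μ) g := spec_seriesOf _ hIfull _
    have hmom : ∀ (n : ℕ) (w : Fin (n+1) → Fin k),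
        Filter.Tendsto (fun N => momentSeries (bseq N) n w) Filter.atTop
          (nhds (momentSeries μ n w)) :=
      fun n w => hconv _
    have hcoef : ∀ (n : ℕ) (w : Fin (n+1) → Fin k),
        Filter.Tendsto (fun N => ((p N : ℕ) : ℂ) * gN N n w) Filter.atTop
          (nhds (g n w)) := by
      intro n w
      have h1 := tendsto_seriesOf (Q := QInt) (Mseq := fun N => momentSeries (bseq N))
        (M := momentSeries μ) hmom n w
      refine h1.congr fun N => ?_
      rw [← spec_unique hIfull (hbspec N)]
    have hftrans := key_transfer hIfull hNfull hgN hfN hc0 hcinv hcoef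
    refine ⟨distOf (momentsOf QNC g), distOf_isDalg _, ⟨g, hμg, ?_⟩, ?_⟩
    · intro n w
      rw [momentSeries_distOf]
      rfl
    · refine convInMoments_of_words hfalg (distOf_isDalg _) ?_
      intro n w
      rw [momentSeries_distOf]
      have h2 := tendsto_momentsOf (Q := QNC)
        (hseq := fun N => fun m v => ((p N : ℕ) : ℂ) * fN N m v) (h := g)
        (fun m v => hftrans m v) n w
      refine h2.congr fun N => ?_
      exact (hfspec N n w).symm
  · -- free convergence implies Boolean convergence to 𝔹⁻¹(ν)
    intro ν hνalg hconv
    set g : NCSeries k := seriesOf QNC (momentSeries ν) with hgdef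
    have hνg : Spec QNC (momentSeries ν) g := spec_seriesOf _ hNfull _
    have hmom : ∀ (n : ℕ) (w : Fin (n+1) → Fin k),
        Filter.Tendsto (fun N => momentSeries (fseq N) n w) Filter.atTop
          (nhds (momentSeries ν n w)) :=
      fun n w => hconv _
    have hcoef : ∀ (n : ℕ) (w : Fin (n+1) → Fin k),
        Filter.Tendsto (fun N => ((p N : ℕ) : ℂ) * fN N n w) Filter.atTop
          (nhds (g n w)) := by
      intro n w
      have h1 := tendsto_seriesOf (Q := QNC) (Mseq := fun N => momentSeries (fseq N))
        (M := momentSeries ν) hmom n w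
      refine h1.congr fun N => ?_
      rw [← spec_unique hNfull (hfspec N)]
    have hgtrans := key_transfer hNfull hIfull hfN hgN hc0 hcinv hcoef
    refine ⟨distOf (momentsOf QInt g), distOf_isDalg _, ⟨g, ?_, hνg⟩, ?_⟩
    · intro n w
      rw [momentSeries_distOf]
      rfl
    · refine convInMoments_of_words hbalg (distOf_isDalg _) ?_
      intro n w
      rw [momentSeries_distOf]
      have h2 := tendsto_momentsOf (Q := QInt)
        (hseq := fun N => fun m v => ((p N : ℕ) : ℂ) * gN N m v) (h := g)
        (fun m v => hgtrans m v) n w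
      refine h2.congr fun N => ?_
      exact (hbspec N n w).symm
end BBP
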